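/- arXiv:2203.09131 — 3 statements merged into one kernel-verified Lean document; each statement's English description precedes it below -/
import Mathlib

section
/- Let M be a uniformizable dual t-motive over k̄ (the algebraic closure of F_q(θ) in C_∞). Then the de Rham pairing H_dR(M, k̄) × H_Betti(M) → C_∞, (ω, γ) ↦ ∫_γ ω := ω(γ), is non-degenerate: if ω ∈ H_dR(M, k̄) satisfies ∫_γ ω = 0 for all γ ∈ H_Betti(M) then ω = 0, and if γ ∈ H_Betti(M) satisfies ∫_γ ω = 0 for all ω ∈ H_dR(M, k̄) then γ = 0. -/
/-- the de Rham pairing of a uniformizable dual `t`-motive `M` over `k̄`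
is non-degenerate.

Model (following the context): `N := M/(t−θ)M` is a `k̄`-vector space and
`W := M†/(t−θ)M†` is a `C_∞`-vector space receiving `N` via `ν`, with `W` the base
change of `N` to `C_∞` (hypothesis `hN`: a `k̄`-basis of `N` maps to a `C_∞`-basis
of `W`).  The de Rham module `H_dR(M,k̄) = Hom_{k̄}(N, k̄)`, and each `ω` extends to
the `C_∞`-linear functional `ext ω` on `W` (hypothesis `hext`).  The Betti module
`HB` is a free `F_q[t]`-module of rank `r`, mapped to `W` by `γ ↦ γ̄` semilinearly
over the (injective) evaluation `ev : F_q[t] → C_∞`, `a ↦ a(θ)`; uniformizability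
says an `F_q[t]`-basis of `HB` maps to a `C_∞`-basis of `W` (hypothesis `hBetti`).
The pairing is `(ω, γ) ↦ ∫_γ ω := (ext ω)(j γ)`; conclusion: it is non-degenerate
in both variables. -/
theorem deRham_pairing_nondegenerate
    (Fq kbar Cinf : Type)
    [Field Fq] [Field kbar] [Field Cinf] [Algebra kbar Cinf]
    (r : ℕ) (hr : 0 < r)
    (N : Type) [AddCommGroup N] [Module kbar N]
    (W : Type) [AddCommGroup W] [Module kbar W] [Module Cinf W]
    [IsScalarTower kbar Cinf W]
    (ν : N →ₗ[kbar] W)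
    (HB : Type) [AddCommGroup HB] [Module (Polynomial Fq) HB]
    (ev : Polynomial Fq →+* Cinf) (hev : Function.Injective ev)
    (j : HB →+ W)
    (hj : ∀ (a : Polynomial Fq) (γ : HB), j (a • γ) = ev a • j γ)
    (ext : (N →ₗ[kbar] kbar) → (W →ₗ[Cinf] Cinf))
    (hext : ∀ (ω : N →ₗ[kbar] kbar) (x : N),
      ext ω (ν x) = algebraMap kbar Cinf (ω x))
    (hBetti : ∃ b : Module.Basis (Fin r) (Polynomial Fq) HB,
      ∃ bw : Module.Basis (Fin r) Cinf W, ∀ i, bw i = j (b i))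
    (hN : ∃ bn : Module.Basis (Fin r) kbar N,
      ∃ bw : Module.Basis (Fin r) Cinf W, ∀ i, bw i = ν (bn i)) :
    (∀ ω : N →ₗ[kbar] kbar, (∀ γ : HB, ext ω (j γ) = 0) → ω = 0) ∧
    (∀ γ : HB, (∀ ω : N →ₗ[kbar] kbar, ext ω (j γ) = 0) → γ = 0) := by

  obtain ⟨b, bw, hbw⟩ := hBetti
  obtain ⟨bn, bw', hbw'⟩ := hN
  have halg : Function.Injective (algebraMap kbar Cinf) :=
    (algebraMap kbar Cinf).injective
  constructor
  · intro ω hω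
    have hW : ext ω = 0 := by
      apply bw.ext
      intro i
      simp [hbw i, hω (b i)]
    apply LinearMap.ext
    intro x
    apply halg
    have h := hext ω x
    rw [hW] at h
    simpa using h.symm
  · intro γ hγ
    -- coordinates of j γ in basis bw' are zero
    have hjγ : j γ = 0 := by
      have hrep : ∀ i, bw'.repr (j γ) i = 0 := by
        intro i
        have h1 : ext (bn.coord i) (j γ) = 0 := hγ _
        have h2 : j γ = ∑ l, bw'.repr (j γ) l • bw' l := (bw'.sum_repr (j γ)).symm
        rw [h2, map_sum] at h1
        have h3 : ∀ l, ext (bn.coord i) (bw'.repr (j γ) l • bw' l)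
            = bw'.repr (j γ) l * (if i = l then 1 else 0) := by
          intro l
          rw [map_smul, hbw' l, hext, Module.Basis.coord_apply, Module.Basis.repr_self,
            Finsupp.single_apply]
          simp [smul_eq_mul, apply_ite (algebraMap kbar Cinf), eq_comm]
        rw [Finset.sum_congr rfl (fun l _ => h3 l)] at h1
        simpa using h1
      have : bw'.repr (j γ) = 0 := by ext i; exact hrep i
      have := congrArg (bw'.repr.symm) this
      simpa using this
    -- now γ = 0
    have hsum : (∑ i, ev (b.repr γ i) • bw i) = 0 := by
      have : γ = ∑ i, b.repr γ i • b i := (b.sum_repr γ).symm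
      calc (∑ i, ev (b.repr γ i) • bw i)
          = ∑ i, j (b.repr γ i • b i) := by
            refine Finset.sum_congr rfl fun i _ => ?_
            rw [hj, hbw i]
        _ = j (∑ i, b.repr γ i • b i) := (map_sum j _ _).symm
        _ = 0 := by rw [← this, hjγ]
    have hcoef : ∀ i, ev (b.repr γ i) = 0 := by
      intro i
      have := Fintype.linearIndependent_iff.mp bw.linearIndependent
        (fun i => ev (b.repr γ i)) hsum
      exact this i
    have hcoef' : ∀ i, b.repr γ i = 0 := fun i => hev (by rw [hcoef i, map_zero])
    have : b.repr γ = 0 := Finsupp.ext hcoef'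
    have := congrArg (b.repr.symm) this
    simpa using this
end

section
/- Let K be a geometric CM field over F_q(t) with maximal totally real subfield K^+, and let M be a CM dual t-motive with generalized CM type (K, Ξ) where Ξ = Σ_{ξ∈J_K} m_ξ ξ. Then the quotient M_{C_∞}/σM_{C_∞} is isomorphic as a C_∞[t]-module to the product ∏_{ξ∈J_K} C_∞[t]/((t−θ)^{m_ξ}). Consequently, the Hodge–Pink weights of M are (−m_ξ)_{ξ∈J_K}. -/
open Polynomial

open Polynomial

section Helpers

variable {A : Type} [CommRing A]

/-- An element outside a maximal ideal `P` is invertible modulo `P ^ m`. -/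
lemma aux_isUnit_mk_pow {P : Ideal A} (hP : P.IsMaximal) {s : A} (hs : s ∉ P) (m : ℕ) :
    IsUnit (Ideal.Quotient.mk (P ^ m) s) := by
  have hcop : IsCoprime (Ideal.span {s}) P := by
    rw [Ideal.isCoprime_iff_exists]
    obtain ⟨z, i, hi, hz⟩ := hP.exists_inv hs
    exact ⟨z * s, Ideal.mem_span_singleton'.mpr ⟨z, rfl⟩, i, hi, hz⟩
  obtain ⟨a, ha, b, hb, hab⟩ := Ideal.isCoprime_iff_exists.mp (hcop.pow_right (n := m))
  obtain ⟨c, rfl⟩ := Ideal.mem_span_singleton'.mp ha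
  refine IsUnit.of_mul_eq_one (Ideal.Quotient.mk (P ^ m) c) ?_
  have hb0 : Ideal.Quotient.mk (P ^ m) b = 0 := Ideal.Quotient.eq_zero_iff_mem.mpr hb
  have := congrArg (Ideal.Quotient.mk (P ^ m)) hab
  rw [map_add, map_one, map_mul, hb0, add_zero] at this
  rw [← this]; ring

/-- If `I` and `J` are coprime ideals then `I•⊤ ⊓ J•⊤ ≤ (I*J)•⊤`. -/
lemma aux_inf_smul_le {M : Type} [AddCommGroup M] [Module A M]
    {I J : Ideal A} (h : IsCoprime I J) :
    (I • ⊤ ⊓ J • ⊤ : Submodule A M) ≤ (I * J) • ⊤ := by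
  have hsup : I ⊔ J = ⊤ := Ideal.isCoprime_iff_sup_eq.mp h
  have h1 : (I • ⊤ ⊓ J • ⊤ : Submodule A M)
      = (I ⊔ J) • (I • ⊤ ⊓ J • ⊤ : Submodule A M) := by
    rw [hsup, Submodule.top_smul]
  calc (I • ⊤ ⊓ J • ⊤ : Submodule A M)
      = I • (I • ⊤ ⊓ J • ⊤ : Submodule A M) ⊔ J • (I • ⊤ ⊓ J • ⊤ : Submodule A M) := by
        rw [← Submodule.sup_smul, ← h1]
    _ ≤ (I * J) • (⊤ : Submodule A M) := by
        apply sup_le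
        · calc I • (I • ⊤ ⊓ J • ⊤ : Submodule A M) ≤ I • (J • (⊤ : Submodule A M)) :=
                Submodule.smul_mono le_rfl inf_le_right
            _ = (I * J) • ⊤ := by rw [← Ideal.smul_eq_mul, Submodule.smul_assoc]
        · calc J • (I • ⊤ ⊓ J • ⊤ : Submodule A M) ≤ J • (I • (⊤ : Submodule A M)) :=
                Submodule.smul_mono le_rfl inf_le_left
            _ = (I * J) • ⊤ := by rw [mul_comm, ← Ideal.smul_eq_mul, Submodule.smul_assoc]

end Helpers

section DualBasis

variable {A : Type} [CommRing A] {M : Type} [AddCommGroup M] [Module A M]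

/-- Coordinates (w.r.t. a dual basis of a projective module) of elements of `J • ⊤` lie in `J`. -/
lemma aux_coord_mem {J : Ideal A} {s : M →ₗ[A] (M →₀ A)} {y : M}
    (hy : y ∈ J • (⊤ : Submodule A M)) (k : M) : s y k ∈ J := by
  refine Submodule.smul_induction_on hy ?_ ?_
  · intro r hr n _
    rw [map_smul, Finsupp.smul_apply, smul_eq_mul]
    exact J.mul_mem_right _ hr
  · intro y z hy hz
    rw [map_add, Finsupp.add_apply]
    exact J.add_mem hy hz

lemma aux_expansion (s : M →ₗ[A] (M →₀ A))
    (hs : Function.LeftInverse (Finsupp.linearCombination A id) s) (x : M) :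
    x = ∑ k ∈ (s x).support, s x k • k := by
  conv_lhs => rw [← hs x]
  rw [Finsupp.linearCombination_apply, Finsupp.sum]
  rfl

/-- If `M` is projective and `M = J•M` with `J` contained in the Jacobson radical,
then `M = 0`. -/
lemma aux_eq_zero_of_jacobson_smul [Module.Projective A M] {J : Ideal A}
    (hJ : J ≤ (⊥ : Ideal A).jacobson)
    (hM : (⊤ : Submodule A M) ≤ J • ⊤) (x : M) : x = 0 := by
  classical
  obtain ⟨s, hs⟩ := Module.projective_def.mp ‹Module.Projective A M›
  set c : M →₀ A := s x with hc
  set E := c.support with hE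
  -- the ideal generated by the coordinates of x
  set U : Ideal A := Ideal.span (↑(E.image c) : Set A) with hU
  have hUfg : U.FG := ⟨E.image c, rfl⟩
  have hxE : x = ∑ k ∈ E, c k • k := aux_expansion s hs x
  have hkey : ∀ k₀ : M, c k₀ = ∑ k ∈ E, c k * s k k₀ := by
    intro k₀
    conv_lhs => rw [hc, hxE, map_sum]
    rw [Finsupp.finset_sum_apply]
    refine Finset.sum_congr rfl fun k _ => ?_
    rw [map_smul, Finsupp.smul_apply, smul_eq_mul]
  have hUle : U ≤ J • U := by
    rw [hU, Ideal.span_le]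
    intro a ha
    obtain ⟨k₀, hk₀, rfl⟩ := Finset.mem_image.mp (by exact_mod_cast ha)
    rw [hkey k₀]
    refine Submodule.sum_mem _ fun k hk => ?_
    rw [mul_comm, ← smul_eq_mul]
    exact Submodule.smul_mem_smul (aux_coord_mem (hM trivial) k₀)
      (Ideal.subset_span (Finset.mem_image_of_mem c hk))
  have hU0 : U = ⊥ := Submodule.eq_bot_of_le_smul_of_le_jacobson_bot J U hUfg hUle hJ
  have hcz : ∀ k ∈ E, c k = 0 := by
    intro k hk
    have : c k ∈ U := Ideal.subset_span (Finset.mem_image_of_mem c hk)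
    rwa [hU0, Ideal.mem_bot] at this
  rw [hxE]
  exact Finset.sum_eq_zero fun k hk => by rw [hcz k hk, zero_smul]

/-- Over a local ring, elements of a projective module which are independent modulo `𝔪M`
are linearly independent. -/
lemma aux_linearIndependent_pair [IsLocalRing A] [Module.Projective A M] {u v : M}
    (h : ∀ α β : A, α • u + β • v ∈ (IsLocalRing.maximalIdeal A) • (⊤ : Submodule A M) →
      α ∈ IsLocalRing.maximalIdeal A ∧ β ∈ IsLocalRing.maximalIdeal A) :
    ∀ a b : A, a • u + b • v = 0 → a = 0 ∧ b = 0 := by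
  obtain ⟨s, hs⟩ := Module.projective_def.mp ‹Module.Projective A M›
  set 𝔪 := IsLocalRing.maximalIdeal A with h𝔪
  have hmem : ∀ y : M, (∀ k, s y k ∈ 𝔪) → y ∈ 𝔪 • (⊤ : Submodule A M) := by
    intro y hy
    rw [aux_expansion s hs y]
    exact Submodule.sum_mem _ fun k _ => Submodule.smul_mem_smul (hy k) trivial
  have hone : (1 : A) ∉ 𝔪 := fun hmem1 =>
    (IsLocalRing.maximalIdeal.isMaximal A).ne_top (Ideal.eq_top_iff_one _ |>.mpr hmem1)
  -- find k₁ with (s u) k₁ a unit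
  have hk₁ : ∃ k₁, s u k₁ ∉ 𝔪 := by
    by_contra hcon
    push_neg at hcon
    have := (h 1 0 (by simpa using hmem u hcon)).1
    exact hone this
  obtain ⟨k₁, hk₁⟩ := hk₁
  set w : M := s u k₁ • v - s v k₁ • u with hw
  have hk₂ : ∃ k₂, s u k₁ * s v k₂ - s v k₁ * s u k₂ ∉ 𝔪 := by
    by_contra hcon
    push_neg at hcon
    have hwmem : w ∈ 𝔪 • (⊤ : Submodule A M) := by
      refine hmem w fun k => ?_
      have : s w k = s u k₁ * s v k - s v k₁ * s u k := by
        rw [hw, map_sub, map_smul, map_smul, Finsupp.sub_apply, Finsupp.smul_apply,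
          Finsupp.smul_apply, smul_eq_mul, smul_eq_mul]
      rw [this]; exact hcon k
    have := (h (-(s v k₁)) (s u k₁) (by rw [neg_smul, ← sub_eq_neg_add]; exact hwmem)).2
    exact hk₁ this
  obtain ⟨k₂, hk₂⟩ := hk₂
  have hD : IsUnit (s u k₁ * s v k₂ - s v k₁ * s u k₂) := by
    by_contra hcon
    exact hk₂ (IsLocalRing.mem_maximalIdeal _ |>.mpr hcon)
  intro a b hab
  have hcoord : ∀ k, a * s u k + b * s v k = 0 := by
    intro k
    have := congrArg (fun z => s z k) hab
    simpa [map_add, map_smul, Finsupp.add_apply, Finsupp.smul_apply, smul_eq_mul] using this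
  have h1 := hcoord k₁
  have h2 := hcoord k₂
  constructor
  · have : a * (s u k₁ * s v k₂ - s v k₁ * s u k₂) = 0 := by linear_combination s v k₂ * h1 - s v k₁ * h2
    exact (hD.mul_left_eq_zero).mp this
  · have : b * (s u k₁ * s v k₂ - s v k₁ * s u k₂) = 0 := by linear_combination (- s u k₂) * h1 + s u k₁ * h2
    exact (hD.mul_left_eq_zero).mp this

end DualBasis

section Loc

variable {A : Type} [CommRing A] {M : Type} [AddCommGroup M] [Module A M]

lemma aux_exists_generator [Module.Projective A M] (P : Ideal A) (hP : P.IsMaximal)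
    (hrk : Module.rank (Localization P.primeCompl) (LocalizedModule P.primeCompl M) = 1) :
    ∃ x : M, x ∉ P • (⊤ : Submodule A M) ∧
      ∀ y : M, ∃ r : A, y - r • x ∈ P • (⊤ : Submodule A M) := by
  classical
  haveI : P.IsPrime := hP.isPrime
  set S := P.primeCompl with hS
  set Rp := Localization S with hRp
  set T := LocalizedModule S M with hT
  set ℓ : M →ₗ[A] T := LocalizedModule.mkLinearMap S M with hℓ
  haveI : IsLocalRing Rp := Localization.AtPrime.isLocalRing P
  haveI : Module.Projective Rp T := Module.projective_of_isLocalizedModule S ℓ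
  set alg : A →+* Rp := algebraMap A Rp with halg
  have hmapeq : P.map alg = IsLocalRing.maximalIdeal Rp :=
    Localization.AtPrime.map_eq_maximalIdeal
  -- Step A : M ≠ P M
  have hstepA : ¬ ((⊤ : Submodule A M) ≤ P • ⊤) := by
    intro hle
    have hJ : P.map alg ≤ (⊥ : Ideal Rp).jacobson := by
      rw [IsLocalRing.jacobson_eq_maximalIdeal (⊥ : Ideal Rp) bot_ne_top, hmapeq]
    have hM : (⊤ : Submodule Rp T) ≤ (P.map alg) • ⊤ := by
      intro t _
      induction t using LocalizedModule.induction_on with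
      | h z u =>
        have hz : z ∈ P • (⊤ : Submodule A M) := hle trivial
        refine Submodule.smul_induction_on hz (fun r hr n _ => ?_) (fun n₁ n₂ h₁ h₂ => ?_)
        · have : (LocalizedModule.mk (r • n) u : T) = alg r • LocalizedModule.mk n u := by
            rw [IsLocalizedModule.mk_eq_mk', IsLocalizedModule.mk_eq_mk',
              IsLocalizedModule.mk'_smul, algebraMap_smul]
          rw [this]
          exact Submodule.smul_mem_smul (Ideal.mem_map_of_mem alg hr) trivial
        · have : (LocalizedModule.mk (n₁ + n₂) u : T)
              = LocalizedModule.mk n₁ u + LocalizedModule.mk n₂ u := by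
            rw [IsLocalizedModule.mk_eq_mk', IsLocalizedModule.mk_eq_mk', IsLocalizedModule.mk_eq_mk',
              IsLocalizedModule.mk'_add]
          rw [this]
          exact Submodule.add_mem _ h₁ h₂
    haveI : Subsingleton T := by
      refine subsingleton_of_forall_eq 0 fun t => ?_
      exact aux_eq_zero_of_jacobson_smul hJ hM t
    rw [rank_subsingleton'] at hrk
    exact zero_ne_one hrk
  obtain ⟨x, hx⟩ : ∃ x : M, x ∉ P • (⊤ : Submodule A M) := by
    by_contra hcon
    push_neg at hcon
    exact hstepA fun z _ => hcon z
  refine ⟨x, hx, fun y => ?_⟩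
  by_contra hy
  push_neg at hy
  -- independence of x,y modulo P•⊤
  have hdagger : ∀ α β : A, α • x + β • y ∈ P • (⊤ : Submodule A M) → α ∈ P ∧ β ∈ P := by
    intro α β hαβ
    have hβ : β ∈ P := by
      by_contra hβ
      obtain ⟨γ, p, hp, hγ⟩ := hP.exists_inv hβ
      -- γ β + p = 1
      have : y - (-(γ * α)) • x ∈ P • (⊤ : Submodule A M) := by
        have h1 : γ • (α • x + β • y) ∈ P • (⊤ : Submodule A M) :=
          Submodule.smul_mem _ γ hαβ
        have h2 : p • y ∈ P • (⊤ : Submodule A M) := Submodule.smul_mem_smul hp trivial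
        have hyrw : y - (-(γ * α)) • x = γ • (α • x + β • y) + p • y := by
          have hγβ : γ * β = 1 - p := by linear_combination hγ
          rw [smul_add, smul_smul, smul_smul, hγβ, sub_smul, one_smul, neg_smul, sub_neg_eq_add]
          abel
        rw [hyrw]
        exact Submodule.add_mem _ h1 h2
      exact hy _ this
    constructor
    · by_contra hα
      obtain ⟨γ, p, hp, hγ⟩ := hP.exists_inv hα
      have hxmem : x ∈ P • (⊤ : Submodule A M) := by
        have h1 : γ • (α • x + β • y) ∈ P • (⊤ : Submodule A M) :=
          Submodule.smul_mem _ γ hαβ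
        have h2 : p • x ∈ P • (⊤ : Submodule A M) := Submodule.smul_mem_smul hp trivial
        have h3 : (γ * β) • y ∈ P • (⊤ : Submodule A M) :=
          Submodule.smul_mem_smul (P.mul_mem_left γ hβ) trivial
        have hxrw : x = γ • (α • x + β • y) - (γ * β) • y + p • x := by
          have hγα : γ * α = 1 - p := by linear_combination hγ
          rw [smul_add, smul_smul, smul_smul, hγα, sub_smul, one_smul]
          abel
        rw [hxrw]
        exact Submodule.add_mem _ (Submodule.sub_mem _ h1 h3) h2
      exact hx hxmem
    · exact hβ
  -- pass to the localization
  set u : T := IsLocalizedModule.mk' ℓ x (1 : S) with hu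
  set v : T := IsLocalizedModule.mk' ℓ y (1 : S) with hv
  set L : Submodule Rp T := (P • (⊤ : Submodule A M)).localized' Rp S ℓ with hL
  have hmle : (IsLocalRing.maximalIdeal Rp) • (⊤ : Submodule Rp T) ≤ L := by
    rw [← hmapeq]
    refine Submodule.smul_le.mpr fun ζ hζ w _ => ?_
    have hgen : P.map alg ≤ L.comap (LinearMap.toSpanSingleton Rp T w) := by
      rw [Ideal.map]
      refine Ideal.span_le.mpr ?_
      rintro _ ⟨p, hp, rfl⟩
      show alg p • w ∈ L
      obtain ⟨⟨z', s'⟩, rfl⟩ := IsLocalizedModule.mk'_surjective S ℓ w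
      simp only [Function.uncurry_apply_pair]
      rw [algebraMap_smul, ← IsLocalizedModule.mk'_smul]
      exact ⟨p • z', Submodule.smul_mem_smul hp trivial, s', rfl⟩
    exact hgen hζ
  have hkey : ∀ z : M, (IsLocalizedModule.mk' ℓ z (1 : S) ∈
      (IsLocalRing.maximalIdeal Rp) • (⊤ : Submodule Rp T)) →
      ∃ t : S, (t : A) • z ∈ P • (⊤ : Submodule A M) := by
    intro z hz
    obtain ⟨z', hz', s', heq⟩ := hmle hz
    obtain ⟨t, ht⟩ := (IsLocalizedModule.mk'_eq_mk'_iff ℓ z' z s' (1 : S)).mp heq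
    refine ⟨t * s', ?_⟩
    have : (t * s' : S) • z = t • z' := by
      rw [Submonoid.smul_def, Submonoid.coe_mul, mul_smul, ← Submonoid.smul_def,
        ← Submonoid.smul_def, ht, one_smul]
    rw [Submonoid.smul_def] at this
    rw [this]
    exact Submodule.smul_of_tower_mem _ _ hz'
  have hmod : ∀ α β : Rp, α • u + β • v ∈
      (IsLocalRing.maximalIdeal Rp) • (⊤ : Submodule Rp T) →
      α ∈ IsLocalRing.maximalIdeal Rp ∧ β ∈ IsLocalRing.maximalIdeal Rp := by
    intro α β hαβ
    obtain ⟨⟨r₁, s₁⟩, (hα : IsLocalization.mk' Rp r₁ s₁ = α)⟩ := IsLocalization.mk'_surjective S α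
    obtain ⟨⟨r₂, s₂⟩, (hβ : IsLocalization.mk' Rp r₂ s₂ = β)⟩ := IsLocalization.mk'_surjective S β
    have hcomp : ((s₁ : A) * (s₂ : A)) • (α • u + β • v)
        = IsLocalizedModule.mk' ℓ ((s₂ * r₁) • x + (s₁ * r₂) • y) (1 : S) := by
      rw [smul_add, IsLocalizedModule.mk'_add, IsLocalizedModule.mk'_smul,
        IsLocalizedModule.mk'_smul]
      congr 1
      · rw [mul_comm ((s₁ : A)) ((s₂ : A)), mul_smul, ← smul_assoc (s₁ : A) α u,
          Algebra.smul_def, ← hα, IsLocalization.mk'_spec', mul_smul]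
        rw [algebraMap_smul]
      · rw [mul_smul, ← smul_assoc (s₂ : A) β v, Algebra.smul_def, ← hβ,
          IsLocalization.mk'_spec', mul_smul]
        rw [algebraMap_smul]
    have hmem2 : IsLocalizedModule.mk' ℓ ((s₂ * r₁) • x + (s₁ * r₂) • y) (1 : S) ∈
        (IsLocalRing.maximalIdeal Rp) • (⊤ : Submodule Rp T) := by
      rw [← hcomp]
      exact Submodule.smul_of_tower_mem _ _ hαβ
    obtain ⟨t, ht⟩ := hkey _ hmem2
    simp only [smul_add, Submonoid.smul_def, smul_smul] at ht
    have hd := hdagger _ _ ht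
    have hr₁ : r₁ ∈ P := by
      have h1 : (t : A) * (s₂ * r₁) = ((t : A) * s₂) * r₁ := by ring
      rw [h1] at hd
      rcases hP.isPrime.mem_or_mem hd.1 with hmem | hmem
      · exact absurd hmem (S.mul_mem t.2 s₂.2)
      · exact hmem
    have hr₂ : r₂ ∈ P := by
      have h1 : (t : A) * (s₁ * r₂) = ((t : A) * s₁) * r₂ := by ring
      rw [h1] at hd
      rcases hP.isPrime.mem_or_mem hd.2 with hmem | hmem
      · exact absurd hmem (S.mul_mem t.2 s₁.2)
      · exact hmem
    constructor
    · rw [← hα, ← hmapeq, IsLocalization.mk'_eq_mul_mk'_one]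
      exact Ideal.mul_mem_right _ _ (Ideal.mem_map_of_mem alg hr₁)
    · rw [← hβ, ← hmapeq, IsLocalization.mk'_eq_mul_mk'_one]
      exact Ideal.mul_mem_right _ _ (Ideal.mem_map_of_mem alg hr₂)
  have hind := aux_linearIndependent_pair (A := Rp) (M := T) hmod
  have hli : LinearIndependent Rp ![u, v] := by
    rw [Fintype.linearIndependent_iff]
    intro g hg
    rw [Fin.sum_univ_two] at hg
    simp only [Matrix.cons_val_zero, Matrix.cons_val_one, Matrix.head_cons] at hg
    obtain ⟨h0, h1⟩ := hind (g 0) (g 1) hg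
    intro i
    fin_cases i
    · exact h0
    · exact h1
  have h2 : (2 : Cardinal) ≤ Module.rank Rp T := by
    have := hli.cardinal_le_rank
    simpa using this
  rw [hrk] at h2
  norm_num at h2


end Loc

section PrimeIso

variable {A : Type} [CommRing A] {M : Type} [AddCommGroup M] [Module A M]

lemma aux_prime_iso [Module.Projective A M] (P : Ideal A) (hP : P.IsMaximal)
    (hrk : Module.rank (Localization P.primeCompl) (LocalizedModule P.primeCompl M) = 1)
    (m : ℕ) :
    Nonempty ((A ⧸ (P ^ m)) ≃ₗ[A] (M ⧸ (P ^ m • ⊤ : Submodule A M))) := by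
  classical
  obtain ⟨x, hx, hgen⟩ := aux_exists_generator P hP hrk
  set φ : A →ₗ[A] (M ⧸ (P ^ m • ⊤ : Submodule A M)) :=
    (P ^ m • ⊤ : Submodule A M).mkQ ∘ₗ LinearMap.toSpanSingleton A M x with hφ
  -- surjectivity modulo arbitrary powers
  have hsur : ∀ k : ℕ, ∀ y : M, ∃ r : A, y - r • x ∈ (P ^ k • ⊤ : Submodule A M) := by
    intro k
    induction k with
    | zero =>
      intro y
      refine ⟨0, ?_⟩
      rw [pow_zero, Ideal.one_eq_top, Submodule.top_smul]
      trivial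
    | succ k ih =>
      have step : ∀ w ∈ (P ^ k • ⊤ : Submodule A M),
          ∃ r : A, w - r • x ∈ (P ^ (k + 1) • ⊤ : Submodule A M) := by
        intro w hw
        refine Submodule.smul_induction_on hw ?_ ?_
        · intro p hp n _
          obtain ⟨r₀, hr₀⟩ := hgen n
          refine ⟨p * r₀, ?_⟩
          have hrw : p • n - (p * r₀) • x = p • (n - r₀ • x) := by
            rw [smul_sub, smul_smul]
          rw [hrw, pow_succ, ← Ideal.smul_eq_mul, Submodule.smul_assoc]
          exact Submodule.smul_mem_smul hp hr₀
        · rintro w₁ w₂ ⟨r₁, h₁⟩ ⟨r₂, h₂⟩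
          refine ⟨r₁ + r₂, ?_⟩
          rw [add_smul]
          convert Submodule.add_mem _ h₁ h₂ using 1
          abel
      intro y
      obtain ⟨r, hr⟩ := ih y
      obtain ⟨r', hr'⟩ := step _ hr
      refine ⟨r + r', ?_⟩
      rw [add_smul]
      convert hr' using 1
      abel
  -- kernel computation
  have hker : ∀ r : A, r • x ∈ (P ^ m • ⊤ : Submodule A M) → r ∈ P ^ m := by
    intro r hr
    rw [show (P ^ m • ⊤ : Submodule A M)
        = P ^ m • Submodule.span A (Set.range (id : M → M)) by
      rw [Set.range_id, Submodule.span_univ]] at hr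
    obtain ⟨a, ha, hsum⟩ := (Submodule.mem_ideal_smul_span_iff_exists_sum
      (P ^ m) (id : M → M) (r • x)).mp hr
    haveI : Module.Flat A M := Module.Flat.of_projective
    set f : Option ↑a.support → A := fun o => o.elim r (fun k => -(a ↑k)) with hf
    set xs : Option ↑a.support → M := fun o => o.elim x (fun k => ↑k) with hxs
    have hsum' : ∑ k : ↑a.support, a ↑k • (↑k : M) = r • x := by
      rw [← hsum, Finsupp.sum]
      simpa using Finset.sum_coe_sort a.support (fun i => a i • i)
    have hrel : ∑ i, f i • xs i = 0 := by
      rw [Fintype.sum_option]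
      simp only [hf, hxs, Option.elim, neg_smul]
      rw [Finset.sum_neg_distrib, hsum', add_neg_cancel]
    obtain ⟨κ, mat, z, hmz, hrels⟩ :=
      Module.Flat.isTrivialRelation_of_sum_smul_eq_zero hrel
    by_cases hall : ∀ j, mat none j ∈ P
    · exfalso
      apply hx
      have := hmz none
      simp only [hxs, Option.elim] at this
      rw [this]
      exact Submodule.sum_mem _ fun j _ => Submodule.smul_mem_smul (hall j) trivial
    · push_neg at hall
      obtain ⟨j₀, hj₀⟩ := hall
      have hUnit := aux_isUnit_mk_pow hP hj₀ m
      have hmem : r * mat none j₀ ∈ P ^ m := by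
        have h0 := hrels j₀
        rw [Fintype.sum_option] at h0
        simp only [hf, Option.elim, neg_mul] at h0
        rw [Finset.sum_neg_distrib, ← sub_eq_add_neg, sub_eq_zero] at h0
        rw [h0]
        exact Submodule.sum_mem _ fun k _ => Ideal.mul_mem_right _ _ (ha ↑k)
      have : Ideal.Quotient.mk (P ^ m) r * Ideal.Quotient.mk (P ^ m) (mat none j₀) = 0 := by
        rw [← map_mul, Ideal.Quotient.eq_zero_iff_mem]
        exact hmem
      have hr0 : Ideal.Quotient.mk (P ^ m) r = 0 := (hUnit.mul_left_eq_zero).mp this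
      exact Ideal.Quotient.eq_zero_iff_mem.mp hr0
  have hle : (P ^ m : Ideal A) ≤ LinearMap.ker φ := by
    intro r hrm
    simp only [hφ, LinearMap.mem_ker, LinearMap.comp_apply, LinearMap.toSpanSingleton_apply,
      Submodule.mkQ_apply, Submodule.Quotient.mk_eq_zero]
    exact Submodule.smul_mem_smul hrm trivial
  set q := Submodule.liftQ (P ^ m : Ideal A) φ hle with hq
  have hinj : Function.Injective q := by
    rw [← LinearMap.ker_eq_bot]
    apply Submodule.ker_liftQ_eq_bot
    intro r hrk2
    simp only [hφ, LinearMap.mem_ker, LinearMap.comp_apply, LinearMap.toSpanSingleton_apply,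
      Submodule.mkQ_apply, Submodule.Quotient.mk_eq_zero] at hrk2
    exact hker r hrk2
  have hsurj : Function.Surjective q := by
    intro w
    obtain ⟨y, rfl⟩ := Submodule.Quotient.mk_surjective _ w
    obtain ⟨r, hr⟩ := hsur m y
    refine ⟨Submodule.Quotient.mk r, ?_⟩
    rw [hq, Submodule.liftQ_apply]
    simp only [hφ, LinearMap.comp_apply, LinearMap.toSpanSingleton_apply, Submodule.mkQ_apply]
    rw [Submodule.Quotient.eq]
    have h2 := Submodule.neg_mem _ hr
    rwa [neg_sub] at h2
  exact ⟨LinearEquiv.ofBijective q ⟨hinj, hsurj⟩⟩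

end PrimeIso

section PolySide

open Polynomial

variable {F : Type} [Field F] {θ : F} {O : Type} [CommRing O] [Algebra F O]
  [Algebra (Polynomial F) O] [IsScalarTower F (Polynomial F) O]
  {ι : Type} [Fintype ι] {P : ι → Ideal O}

lemma aux_pow_not_mem (hmax : ∀ i, (P i).IsMaximal) (hdist : ∀ i j, i ≠ j → P i ≠ P j)
    (hsplit : Ideal.span {algebraMap (Polynomial F) O (X - C θ)} = ∏ i, P i)
    (hdim : ∀ (i : ι) (n : ℕ), Module.finrank F (O ⧸ (P i ^ n)) = n)
    (i : ι) (n : ℕ) :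
    (algebraMap (Polynomial F) O (X - C θ)) ^ n ∉ P i ^ (n + 1) := by
  classical
  intro hmem
  have hprod : (∏ j, P j) ^ n = P i ^ n * ∏ j ∈ Finset.univ.erase i, P j ^ n := by
    rw [← Finset.prod_pow]
    exact (Finset.mul_prod_erase Finset.univ (fun j => P j ^ n) (Finset.mem_univ i)).symm
  have hle : P i ^ n * (∏ j ∈ Finset.univ.erase i, P j ^ n) ≤ P i ^ (n + 1) := by
    rw [← hprod, ← hsplit, Ideal.span_singleton_pow, Ideal.span_le]
    intro w hw
    rw [Set.mem_singleton_iff] at hw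
    subst hw
    exact hmem
  have hcop : IsCoprime (P i ^ (n + 1)) (∏ j ∈ Finset.univ.erase i, P j ^ n) := by
    refine IsCoprime.prod_right fun j hj => ?_
    have hne : i ≠ j := fun h => (Finset.mem_erase.mp hj).1 h.symm
    exact (Ideal.isCoprime_iff_sup_eq.mpr ((hmax i).coprime_of_ne (hmax j) (hdist i j hne))).pow
  have hle2 : P i ^ n ≤ P i ^ (n + 1) := by
    obtain ⟨a, ham, b, hbm, hab⟩ := Ideal.isCoprime_iff_exists.mp hcop
    intro ξ hξ
    have hξ2 : ξ = ξ * a + ξ * b := by linear_combination ξ * hab.symm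
    rw [hξ2]
    refine Ideal.add_mem _ (Ideal.mul_mem_left _ _ ham) ?_
    exact hle (Ideal.mul_mem_mul hξ hbm)
  have heq : P i ^ n = P i ^ (n + 1) :=
    le_antisymm hle2 (Ideal.pow_le_pow_right (Nat.le_succ n))
  have hdn := hdim i n
  rw [heq] at hdn
  have hdn1 := hdim i (n + 1)
  omega

lemma aux_dvd_of_mem_pow (hmax : ∀ i, (P i).IsMaximal) (hdist : ∀ i j, i ≠ j → P i ≠ P j)
    (hsplit : Ideal.span {algebraMap (Polynomial F) O (X - C θ)} = ∏ i, P i)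
    (hdim : ∀ (i : ι) (n : ℕ), Module.finrank F (O ⧸ (P i ^ n)) = n)
    (i : ι) (n : ℕ) (f : Polynomial F)
    (hmem : algebraMap (Polynomial F) O f ∈ P i ^ n) : (X - C θ) ^ n ∣ f := by
  classical
  set v : O := algebraMap (Polynomial F) O (X - C θ) with hv
  have hvP : v ∈ P i := by
    have h1 : v ∈ Ideal.span {v} := Ideal.mem_span_singleton_self v
    rw [hsplit] at h1
    exact (Ideal.prod_le_inf.trans (Finset.inf_le (Finset.mem_univ i))) h1
  induction n generalizing f with
  | zero => simpa using one_dvd f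
  | succ n ih =>
    have h' : algebraMap (Polynomial F) O f ∈ P i ^ n :=
      Ideal.pow_le_pow_right (Nat.le_succ n) hmem
    obtain ⟨g, rfl⟩ := ih f h'
    have hroot : g.IsRoot θ := by
      by_contra hgθ
      have halgg : algebraMap (Polynomial F) O g ∉ P i := by
        intro hgP
        have hdecomp : g = C (g.eval θ) + (X - C θ) * (g /ₘ (X - C θ)) := by
          conv_lhs => rw [← Polynomial.modByMonic_add_div g (X - C θ)]
          rw [Polynomial.modByMonic_X_sub_C_eq_C_eval]
        have hCmem : algebraMap (Polynomial F) O (C (g.eval θ)) ∈ P i := by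
          have h2 : algebraMap (Polynomial F) O (C (g.eval θ))
              = algebraMap (Polynomial F) O g
                - v * algebraMap (Polynomial F) O (g /ₘ (X - C θ)) := by
            conv_lhs => rw [show (C (g.eval θ) : Polynomial F)
              = g - (X - C θ) * (g /ₘ (X - C θ)) by linear_combination -hdecomp]
            rw [map_sub, map_mul, hv]
          rw [h2]
          exact Ideal.sub_mem _ hgP (Ideal.mul_mem_right _ _ hvP)
        have hunit : IsUnit (algebraMap (Polynomial F) O (C (g.eval θ))) := by
          have : algebraMap (Polynomial F) O (C (g.eval θ)) = algebraMap F O (g.eval θ) := by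
            rw [IsScalarTower.algebraMap_apply F (Polynomial F) O, Polynomial.algebraMap_eq]
          rw [this]
          exact (isUnit_iff_ne_zero.mpr hgθ).map (algebraMap F O)
        exact (hmax i).ne_top (Ideal.eq_top_of_isUnit_mem _ hCmem hunit)
      have hU := aux_isUnit_mk_pow (hmax i) halgg (n + 1)
      have hvn : v ^ n ∈ P i ^ (n + 1) := by
        have h3 : Ideal.Quotient.mk (P i ^ (n + 1)) (v ^ n)
            * Ideal.Quotient.mk (P i ^ (n + 1)) (algebraMap (Polynomial F) O g) = 0 := by
          rw [← map_mul, Ideal.Quotient.eq_zero_iff_mem]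
          have : v ^ n * algebraMap (Polynomial F) O g
              = algebraMap (Polynomial F) O ((X - C θ) ^ n * g) := by
            rw [map_mul, map_pow, hv]
          rw [this]
          exact hmem
        have := (hU.mul_left_eq_zero).mp h3
        exact Ideal.Quotient.eq_zero_iff_mem.mp this
      exact aux_pow_not_mem hmax hdist hsplit hdim i n hvn
    obtain ⟨g₂, rfl⟩ := (Polynomial.dvd_iff_isRoot).mpr hroot
    exact ⟨g₂, by rw [pow_succ]; ring⟩

lemma aux_poly_iso (hmax : ∀ i, (P i).IsMaximal) (hdist : ∀ i j, i ≠ j → P i ≠ P j)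
    (hsplit : Ideal.span {algebraMap (Polynomial F) O (X - C θ)} = ∏ i, P i)
    (hdim : ∀ (i : ι) (n : ℕ), Module.finrank F (O ⧸ (P i ^ n)) = n)
    (i : ι) (m : ℕ) :
    Nonempty ((Polynomial F ⧸ Ideal.span {(X - C θ) ^ m}) ≃ₗ[Polynomial F] (O ⧸ (P i ^ m))) := by
  classical
  rcases Nat.eq_zero_or_pos m with rfl | hm
  · have h1 : Ideal.span {(X - C θ) ^ 0} = (⊤ : Ideal (Polynomial F)) := by
      simp [Ideal.span_singleton_one]
    have h2 : P i ^ 0 = (⊤ : Ideal O) := by rw [pow_zero, Ideal.one_eq_top]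
    haveI : Subsingleton (Polynomial F ⧸ Ideal.span {(X - C θ) ^ 0}) :=
      Submodule.Quotient.subsingleton_iff.mpr (by exact_mod_cast h1)
    haveI : Subsingleton (O ⧸ (P i ^ 0)) :=
      Submodule.Quotient.subsingleton_iff.mpr (by exact_mod_cast h2)
    exact ⟨LinearEquiv.ofSubsingleton _ _⟩
  · set v : O := algebraMap (Polynomial F) O (X - C θ) with hv
    have hvP : v ∈ P i := by
      have h1 : v ∈ Ideal.span {v} := Ideal.mem_span_singleton_self v
      rw [hsplit] at h1
      exact (Ideal.prod_le_inf.trans (Finset.inf_le (Finset.mem_univ i))) h1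
    set g : Polynomial F →ₗ[Polynomial F] (O ⧸ (P i ^ m)) :=
      Algebra.linearMap (Polynomial F) (O ⧸ (P i ^ m)) with hg
    have hcomp : ∀ p : Polynomial F,
        g p = Ideal.Quotient.mk (P i ^ m) (algebraMap (Polynomial F) O p) := fun p => rfl
    have hle : Ideal.span {(X - C θ) ^ m} ≤ LinearMap.ker g := by
      rw [Ideal.span_le]
      intro w hw
      rw [Set.mem_singleton_iff] at hw
      subst hw
      rw [SetLike.mem_coe, LinearMap.mem_ker, hcomp, Ideal.Quotient.eq_zero_iff_mem, map_pow]
      exact Ideal.pow_mem_pow hvP m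
    set q := Submodule.liftQ (Ideal.span {(X - C θ) ^ m} : Ideal (Polynomial F)) g hle with hq
    have hinj : Function.Injective q := by
      rw [← LinearMap.ker_eq_bot]
      apply Submodule.ker_liftQ_eq_bot
      intro r hr
      rw [LinearMap.mem_ker, hcomp, Ideal.Quotient.eq_zero_iff_mem] at hr
      exact Ideal.mem_span_singleton.mpr (aux_dvd_of_mem_pow hmax hdist hsplit hdim i m r hr)
    have hpb : ((X - C θ) ^ m : Polynomial F) ≠ 0 := pow_ne_zero _ (X_sub_C_ne_zero θ)
    haveI hfd1 : FiniteDimensional F (Polynomial F ⧸ Ideal.span {(X - C θ) ^ m}) :=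
      (AdjoinRoot.powerBasis hpb).finite
    have hdim1 : Module.finrank F (Polynomial F ⧸ Ideal.span {(X - C θ) ^ m}) = m := by
      have := (AdjoinRoot.powerBasis hpb).finrank
      simp [natDegree_pow, natDegree_X_sub_C] at this
      exact this
    haveI hfd2 : FiniteDimensional F (O ⧸ (P i ^ m)) :=
      FiniteDimensional.of_finrank_pos (by rw [hdim i m]; exact hm)
    have hsurj : Function.Surjective q := by
      have hq' : Function.Injective (LinearMap.restrictScalars F q) := hinj
      have := (LinearMap.injective_iff_surjective_of_finrank_eq_finrank
        (by rw [hdim1, hdim i m]) (f := LinearMap.restrictScalars F q)).mp hq'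
      exact this
    exact ⟨LinearEquiv.ofBijective q ⟨hinj, hsurj⟩⟩

end PolySide

/-- let `M` be a CM dual `t`-motive with generalized CM type `(K, Ξ)`,
`Ξ = Σ_{ξ∈J_K} m_ξ ξ`.  Then `M_{C∞}/σM_{C∞} ≅ ∏_{ξ∈J_K} C∞[t]/((t−θ)^{m_ξ})` as
`C∞[t]`-modules; consequently the Hodge–Pink weights of `M` are `(−m_ξ)_ξ`.

Model (as in the context): `F` plays `C_∞`, `R = F[t]` and `O = O_𝐊 = C∞ ⊗ O_K` is
an `R`-algebra in which the ideal `(t−θ)` splits completely as the product of the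
distinct maximal ideals `P ξ`, `ξ ∈ J_K` (a finite index type `ι`), with
`dim_F O/P_ξ^m = m`; `M` is a projective `O`-module of rank one (locally free of
rank one at every maximal ideal) and `σM = I_Ξ·M` with `I_Ξ = ∏ P_ξ^{m_ξ}`.  The
conclusion is the displayed `F[t]`-linear isomorphism
`M / I_Ξ·M ≅ ∏_ξ F[t]/((X−θ)^{m_ξ})`. -/
theorem cm_dual_t_motive_hodgePink_weights
    (F : Type) [Field F] (θ : F)
    (O : Type) [CommRing O] [Algebra F O] [Algebra (Polynomial F) O]
    [IsScalarTower F (Polynomial F) O]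
    (ι : Type) [Fintype ι] (P : ι → Ideal O)
    (hmax : ∀ i, (P i).IsMaximal)
    (hdist : ∀ i j, i ≠ j → P i ≠ P j)
    (hsplit : Ideal.span {algebraMap (Polynomial F) O (X - C θ)} = ∏ i, P i)
    (hdim : ∀ (i : ι) (n : ℕ), Module.finrank F (O ⧸ (P i ^ n)) = n)
    (M : Type) [AddCommGroup M] [Module O M]
    [Module (Polynomial F) M] [IsScalarTower (Polynomial F) O M]
    [Module.Projective O M]
    (hrk : ∀ (Q : Ideal O) (hQ : Q.IsMaximal),
      Module.rank (Localization (@Ideal.primeCompl O _ Q hQ.isPrime))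
        (LocalizedModule (@Ideal.primeCompl O _ Q hQ.isPrime) M) = 1)
    (m : ι → ℕ) :
    Nonempty
      ((M ⧸ (Submodule.restrictScalars (Polynomial F)
          ((∏ i, P i ^ m i) • (⊤ : Submodule O M)))) ≃ₗ[Polynomial F]
        ((i : ι) → Polynomial F ⧸ Ideal.span {(X - C θ) ^ m i})) := by
  classical
  have hile : ∀ i, (∏ j, P j ^ m j) ≤ P i ^ m i := fun i =>
    Ideal.prod_le_inf.trans (Finset.inf_le (Finset.mem_univ i))
  have hcopQ : ∀ i j, i ≠ j → IsCoprime (P i ^ m i) (P j ^ m j) := fun i j hij =>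
    (Ideal.isCoprime_iff_sup_eq.mpr ((hmax i).coprime_of_ne (hmax j) (hdist i j hij))).pow
  -- intersection of the smuls is contained in the smul by the product
  have hinf : ∀ s : Finset ι,
      (s.inf fun i => ((P i ^ m i) • ⊤ : Submodule O M)) ≤ (∏ i ∈ s, P i ^ m i) • ⊤ := by
    intro s
    induction s using Finset.cons_induction with
    | empty =>
      rw [Finset.inf_empty, Finset.prod_empty, Ideal.one_eq_top, Submodule.top_smul]
    | cons a s ha ih =>
      rw [Finset.inf_cons, Finset.prod_cons]
      have hcop : IsCoprime (P a ^ m a) (∏ i ∈ s, P i ^ m i) :=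
        IsCoprime.prod_right fun j hj => hcopQ a j (fun h => ha (h ▸ hj))
      calc ((P a ^ m a) • ⊤ : Submodule O M) ⊓ (s.inf fun i => ((P i ^ m i) • ⊤ : Submodule O M))
          ≤ ((P a ^ m a) • ⊤ : Submodule O M) ⊓ (∏ i ∈ s, P i ^ m i) • ⊤ :=
            inf_le_inf_left _ ih
        _ ≤ _ := aux_inf_smul_le hcop
  -- the CRT map
  set Ψ : (M ⧸ ((∏ i, P i ^ m i) • ⊤ : Submodule O M)) →ₗ[O]
      ((i : ι) → M ⧸ ((P i ^ m i) • ⊤ : Submodule O M)) :=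
    LinearMap.pi (fun i => Submodule.mapQ _ _ LinearMap.id
      (by simpa using Submodule.smul_mono (hile i) (le_refl (⊤ : Submodule O M)))) with hΨ
  have hinjΨ : Function.Injective Ψ := by
    rw [← LinearMap.ker_eq_bot, LinearMap.ker_eq_bot']
    intro w hw
    obtain ⟨z, rfl⟩ := Submodule.Quotient.mk_surjective _ w
    have hz : ∀ i, z ∈ ((P i ^ m i) • ⊤ : Submodule O M) := by
      intro i
      have hcomp := congrFun hw i
      simpa [hΨ, Submodule.mapQ_apply, Submodule.Quotient.mk_eq_zero] using hcomp
    have hzmem : z ∈ (Finset.univ.inf fun i => ((P i ^ m i) • ⊤ : Submodule O M)) :=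
      Submodule.mem_finsetInf.mpr fun i _ => hz i
    have hzI := hinf Finset.univ hzmem
    rwa [Submodule.Quotient.mk_eq_zero]
  have hsurjΨ : Function.Surjective Ψ := by
    intro ζ
    choose w hw using fun i => Submodule.Quotient.mk_surjective _ (ζ i)
    have hcop2 : ∀ i : ι, ∃ c : O, (c - 1) ∈ P i ^ m i ∧ ∀ j, j ≠ i → c ∈ P j ^ m j := by
      intro i
      have hcop : IsCoprime (P i ^ m i) (∏ j ∈ Finset.univ.erase i, P j ^ m j) :=
        IsCoprime.prod_right fun j hj => hcopQ i j (fun h => (Finset.mem_erase.mp hj).1 h.symm)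
      obtain ⟨a, ha, b, hb, hab⟩ := Ideal.isCoprime_iff_exists.mp hcop
      refine ⟨b, ?_, ?_⟩
      · have hb1 : b - 1 = -a := by linear_combination hab
        rw [hb1]; exact Submodule.neg_mem _ ha
      · intro j hj
        exact (Ideal.prod_le_inf.trans
          (Finset.inf_le (Finset.mem_erase.mpr ⟨hj, Finset.mem_univ j⟩))) hb
    choose c hc1 hc2 using hcop2
    refine ⟨Submodule.Quotient.mk (∑ i, c i • w i), ?_⟩
    funext i
    simp only [hΨ, LinearMap.pi_apply, Submodule.mapQ_apply, LinearMap.id_apply]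
    rw [← hw i, Submodule.Quotient.eq]
    have hsplit2 : (∑ j, c j • w j) - w i
        = (∑ j ∈ Finset.univ.erase i, c j • w j) + ((c i - 1) • w i) := by
      rw [sub_smul, one_smul, ← Finset.sum_erase_add Finset.univ _ (Finset.mem_univ i)]
      abel
    rw [hsplit2]
    refine Submodule.add_mem _ (Submodule.sum_mem _ fun j hj => ?_) ?_
    · exact Submodule.smul_mem_smul (hc2 j i fun h => (Finset.mem_erase.mp hj).1 h.symm) trivial
    · exact Submodule.smul_mem_smul (hc1 i) trivial
  have eCRT := LinearEquiv.ofBijective Ψ ⟨hinjΨ, hsurjΨ⟩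
  -- per-index equivalences
  have hiso : ∀ i : ι, Nonempty ((M ⧸ ((P i ^ m i) • ⊤ : Submodule O M)) ≃ₗ[Polynomial F]
      (Polynomial F ⧸ Ideal.span {(X - C θ) ^ m i})) := by
    intro i
    obtain ⟨e3⟩ := aux_prime_iso (P i) (hmax i) (hrk (P i) (hmax i)) (m i)
    obtain ⟨e4⟩ := aux_poly_iso hmax hdist hsplit hdim i (m i)
    exact ⟨((e3.restrictScalars (Polynomial F)).symm.trans
      (e4.restrictScalars (Polynomial F)).symm)⟩
  have e5 : ∀ i : ι, (M ⧸ ((P i ^ m i) • ⊤ : Submodule O M)) ≃ₗ[Polynomial F]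
      (Polynomial F ⧸ Ideal.span {(X - C θ) ^ m i}) := fun i => (hiso i).some
  have e1 := Submodule.Quotient.restrictScalarsEquiv (Polynomial F)
    ((∏ i, P i ^ m i) • ⊤ : Submodule O M)
  exact ⟨e1.trans ((eCRT.restrictScalars (Polynomial F)).trans (LinearEquiv.piCongrRight e5))⟩
end

section
/- Let K be a geometric CM field over F_q(t) with maximal totally real subfield K^+, and fix ξ_0 ∈ J_K. Define Ξ_0 := [K:K^+]·ξ_0 + Σ_{ξ∈J_K, π_{X/X^+}(ξ) ≠ π_{X/X^+}(ξ_0)} ξ ∈ I_K^0. Then Ξ_0 is a non-degenerate generalized CM type: the subgroup I_{Ξ_0}^0 of I_K^0 generated by all Galois conjugates ς(Ξ_0), ς ∈ Gal(k^sep/k), satisfies ℚ ⊗_ℤ I_{Ξ_0}^0 = ℚ ⊗_ℤ I_K^0. Specifically: (i) N_K := Σ_{ξ∈J_K} ξ = (1/[K:F_q(t)]) Σ_{ς∈G_k/H_0} ς(Ξ_0) in ℚ⊗I_{Ξ_0}^0, where H_0 is the stabilizer of ξ_0; (ii) for every CM type Ξ = ξ_1+···+ξ_d of K (d = [K^+:F_q(t)]),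 choosing ς_i ∈ G_k with ς_i(ξ_0) = ξ_i, one has Σ_{i=1}^d ς_i(Ξ_0) = [K:K^+]·Ξ + ([K^+:F_q(t)]−1)·N_K, so Ξ ∈ ℚ⊗I_{Ξ_0}^0. -/
open Finset

/-- The sum of the coefficients of `Φ` over the fiber of `π` above `y`. -/
noncomputable def fiberSum {J Jp : Type} [Fintype J] [DecidableEq Jp]
    (π : J → Jp) (Φ : J → ℤ) (y : Jp) : ℤ :=
  ∑ x ∈ Finset.univ.filter (fun x => π x = y), Φ x

/-- The subgroup `I_K^0` of divisors supported on `J_K` all of whose fiber sums agree. -/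
noncomputable def equalFiberSums {J Jp : Type} [Fintype J] [DecidableEq Jp]
    (π : J → Jp) : Submodule ℤ (J → ℤ) where
  carrier := {Φ | ∀ y₁ y₂ : Jp, fiberSum π Φ y₁ = fiberSum π Φ y₂}
  add_mem' := by
    intro a b ha hb y₁ y₂
    simp only [fiberSum, Pi.add_apply, Finset.sum_add_distrib] at *
    rw [ha y₁ y₂, hb y₁ y₂]
  zero_mem' := by
    intro y₁ y₂
    simp [fiberSum]
  smul_mem' := by
    intro c a ha y₁ y₂
    simp only [fiberSum, Pi.smul_apply, smul_eq_mul, ← Finset.mul_sum] at *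
    rw [ha y₁ y₂]

/-- The divisor `Ξ₀ := [K:K⁺]·ξ₀ + Σ_{π ξ ≠ π ξ₀} ξ`. -/
noncomputable def XiZero {J Jp : Type} [DecidableEq J] [DecidableEq Jp]
    (π : J → Jp) (ξ0 : J) (mK : ℕ) : J → ℤ :=
  fun x => if π x = π ξ0 then (if x = ξ0 then (mK : ℤ) else 0) else 1

/-- The Galois translate `ς(Φ)` of a divisor. -/
def transl {G J : Type} [Group G] [MulAction G J] (g : G) (Φ : J → ℤ) : J → ℤ :=
  fun x => Φ (g⁻¹ • x)

/-- for a geometric CM field `K/F_q(t)` with maximal totally real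
subfield `K⁺` and a fixed `ξ₀ ∈ J_K`, the generalized CM type
`Ξ₀ = [K:K⁺]·ξ₀ + Σ_{π(ξ)≠π(ξ₀)} ξ` is non-degenerate.

Model: a (finite) Galois group `G` acts transitively on `J = J_K` and on
`Jp = J_{K⁺}`, with `π = π_{X/X⁺}` equivariant, surjective, and with all fibers
of size `mK = [K:K⁺]`.  Conclusions:
(0) the span `I_{Ξ₀}^0` of all translates `ς(Ξ₀)` is contained in `I_K^0`;
(i) (an integral form of (i)) `Σ_{ς∈G} ς(Ξ₀) = |G| · N_K`, where `N_K` is the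
    all-ones divisor — equivalently, dividing by `|H₀| = |G|/[K:F_q(t)]`,
    `Σ_{ς ∈ G/H₀} ς(Ξ₀) = [K:F_q(t)] · N_K`;
(ii) for every CM type `Ξ = ξ_1 + ⋯ + ξ_d` (the indicator of the range of a
    section `s` of `π`) and any choices `ς_y` with `ς_y(ξ₀) = s(y)`:
    `Σ_y ς_y(Ξ₀) = [K:K⁺]·Ξ + ([K⁺:F_q(t)] − 1)·N_K`;
(iii) non-degeneracy: `ℚ ⊗ I_{Ξ₀}^0 = ℚ ⊗ I_K^0`, i.e. every `Φ ∈ I_K^0` has a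
    nonzero integer multiple lying in `I_{Ξ₀}^0`. -/
theorem XiZero_nondegenerate
    (G : Type) [Group G] [Fintype G]
    {J Jp : Type} [Fintype J] [Fintype Jp] [DecidableEq J] [DecidableEq Jp]
    [MulAction G J] [MulAction G Jp]
    (π : J → Jp) (hequiv : ∀ (g : G) (x : J), π (g • x) = g • π x)
    (hπsurj : Function.Surjective π)
    (htrans : ∀ x y : J, ∃ g : G, g • x = y)
    (mK : ℕ) (hmK : 0 < mK)
    (hfib : ∀ y : Jp, (Finset.univ.filter (fun x => π x = y)).card = mK)
    (ξ0 : J) :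
    -- (0)
    (Submodule.span ℤ {Φ : J → ℤ | ∃ g : G, Φ = transl g (XiZero π ξ0 mK)} ≤
      equalFiberSums π) ∧
    -- (i)
    ((∑ g : G, transl g (XiZero π ξ0 mK)) = fun _ => (Fintype.card G : ℤ)) ∧
    -- (ii)
    (∀ s : Jp → J, (∀ y, π (s y) = y) →
      ∀ g : Jp → G, (∀ y, g y • ξ0 = s y) →
      (∑ y : Jp, transl (g y) (XiZero π ξ0 mK)) =
        fun x => (mK : ℤ) * Set.indicator (Set.range s) (fun _ => (1 : ℤ)) x +
          ((Fintype.card Jp : ℤ) - 1)) ∧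
    -- (iii)
    (∀ Φ ∈ equalFiberSums π, ∃ nz : ℤ, nz ≠ 0 ∧
      nz • Φ ∈ Submodule.span ℤ
        {Φ' : J → ℤ | ∃ g : G, Φ' = transl g (XiZero π ξ0 mK)}) := by
  classical
  set Φ0 : J → ℤ := XiZero π ξ0 mK with hΦ0
  -- pointwise formula for a translate
  have hpt : ∀ (g : G) (x : J), transl g Φ0 x =
      if π x = g • π ξ0 then (if x = g • ξ0 then (mK : ℤ) else 0) else 1 := by
    intro g x
    simp only [hΦ0, transl, XiZero, hequiv, inv_smul_eq_iff]
  -- each translate has all fiber sums equal to mK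
  have hfs : ∀ (g : G) (y : Jp), fiberSum π (transl g Φ0) y = (mK : ℤ) := by
    intro g y
    unfold fiberSum
    by_cases hy : y = g • π ξ0
    · subst hy
      have hcg : ∀ x ∈ Finset.univ.filter (fun x => π x = g • π ξ0),
          transl g Φ0 x = if x = g • ξ0 then (mK : ℤ) else 0 := by
        intro x hx
        rw [hpt, if_pos (Finset.mem_filter.mp hx).2]
      rw [Finset.sum_congr rfl hcg, Finset.sum_ite_eq']
      rw [if_pos (Finset.mem_filter.mpr ⟨Finset.mem_univ _, by rw [hequiv]⟩)]
    · have hcg : ∀ x ∈ Finset.univ.filter (fun x => π x = y),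
          transl g Φ0 x = 1 := by
        intro x hx
        rw [hpt, if_neg]
        intro h
        exact hy ((Finset.mem_filter.mp hx).2.symm.trans h)
      rw [Finset.sum_congr rfl hcg, Finset.sum_const, hfib y]
      simp
  -- (0)
  have h0 : Submodule.span ℤ {Φ : J → ℤ | ∃ g : G, Φ = transl g Φ0} ≤
      equalFiberSums π := by
    rw [Submodule.span_le]
    rintro Φ' ⟨g, rfl⟩
    intro y₁ y₂
    rw [hfs g y₁, hfs g y₂]
  -- total mass of Φ0 is |J|
  have hΞfib0 : ∀ y : Jp, fiberSum π Φ0 y = (mK : ℤ) := by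
    intro y
    have h1 : transl (1 : G) Φ0 = Φ0 := funext fun x => by simp [transl]
    have := hfs 1 y
    rwa [h1] at this
  have htot : ∑ z : J, Φ0 z = (Fintype.card J : ℤ) := by
    have h1 : ∑ y : Jp, fiberSum π Φ0 y = ∑ z : J, Φ0 z := by
      unfold fiberSum
      exact Finset.sum_fiberwise _ _ _
    have h2 : (Fintype.card J : ℕ) = ∑ y : Jp, mK := by
      rw [← Finset.card_univ,
        Finset.card_eq_sum_card_fiberwise (fun x _ => Finset.mem_univ (π x))]
      exact Finset.sum_congr rfl fun y _ => hfib y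
    rw [← h1, Finset.sum_congr rfl fun y _ => hΞfib0 y]
    rw [h2]
    push_cast
    rfl
  -- (i)
  have hi : (∑ g : G, transl g Φ0) = fun _ => (Fintype.card G : ℤ) := by
    funext x
    rw [Finset.sum_apply]
    have hinv : ∑ g : G, transl g Φ0 x = ∑ g : G, Φ0 (g • x) :=
      Fintype.sum_equiv (Equiv.inv G) _ _ (fun g => rfl)
    rw [hinv]
    have hconst : ∀ x x' : J, ∑ g : G, Φ0 (g • x) = ∑ g : G, Φ0 (g • x') := by
      intro x x'
      obtain ⟨h, hh⟩ := htrans x x'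
      refine Fintype.sum_equiv (Equiv.mulRight h⁻¹) _ _ (fun g => ?_)
      simp only [Equiv.coe_mulRight]
      rw [← hh, mul_smul, inv_smul_smul]
    have e1 : ∑ x' : J, ∑ g : G, Φ0 (g • x') =
        (Fintype.card J : ℤ) * ∑ g : G, Φ0 (g • x) := by
      rw [Finset.sum_congr rfl fun x' _ => hconst x' x, Finset.sum_const,
        Finset.card_univ, nsmul_eq_mul]
    have e2 : ∑ x' : J, ∑ g : G, Φ0 (g • x') =
        (Fintype.card G : ℤ) * (Fintype.card J : ℤ) := by
      rw [Finset.sum_comm]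
      have hrow : ∀ g : G, ∑ x' : J, Φ0 (g • x') = (Fintype.card J : ℤ) := by
        intro g
        rw [← htot]
        exact Fintype.sum_equiv (MulAction.toPerm g) _ _ (fun x' => rfl)
      rw [Finset.sum_congr rfl fun g _ => hrow g, Finset.sum_const,
        Finset.card_univ, nsmul_eq_mul]
    have hJpos : (Fintype.card J : ℤ) ≠ 0 := by
      have : 0 < Fintype.card J := Fintype.card_pos_iff.mpr ⟨ξ0⟩
      exact_mod_cast this.ne'
    exact mul_left_cancel₀ hJpos (e1.symm.trans (e2.trans (mul_comm _ _)))
  -- indicator of the range of a section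
  have hind : ∀ (s : Jp → J), (∀ y, π (s y) = y) → ∀ x : J,
      Set.indicator (Set.range s) (fun _ => (1 : ℤ)) x =
        if x = s (π x) then 1 else 0 := by
    intro s hs x
    by_cases h : x = s (π x)
    · have hm : x ∈ Set.range s := ⟨π x, h.symm⟩
      rw [if_pos h, Set.indicator_of_mem hm]
    · rw [if_neg h, Set.indicator_of_notMem]
      rintro ⟨y, hy⟩
      exact h (by rw [← hy, hs y])
  -- (ii)
  have hii : ∀ s : Jp → J, (∀ y, π (s y) = y) →
      ∀ g : Jp → G, (∀ y, g y • ξ0 = s y) →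
      (∑ y : Jp, transl (g y) Φ0) =
        fun x => (mK : ℤ) * Set.indicator (Set.range s) (fun _ => (1 : ℤ)) x +
          ((Fintype.card Jp : ℤ) - 1) := by
    intro s hs g hg
    funext x
    rw [Finset.sum_apply]
    have hterm : ∀ y : Jp, transl (g y) Φ0 x =
        if π x = y then (if x = s y then (mK : ℤ) else 0) else 1 := by
      intro y
      rw [hpt]
      have h1 : g y • π ξ0 = y := by rw [← hequiv, hg, hs]
      rw [h1, hg y]
    rw [Finset.sum_congr rfl fun y _ => hterm y,
      ← Finset.add_sum_erase _ _ (Finset.mem_univ (π x)), if_pos rfl]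
    have hrest : ∑ y ∈ Finset.univ.erase (π x),
        (if π x = y then (if x = s y then (mK : ℤ) else 0) else 1) =
        (Fintype.card Jp : ℤ) - 1 := by
      rw [Finset.sum_congr rfl fun y hy =>
        if_neg (Ne.symm (Finset.ne_of_mem_erase hy))]
      rw [Finset.sum_const, Finset.card_erase_of_mem (Finset.mem_univ _),
        Finset.card_univ, nsmul_eq_mul, mul_one]
      have h1 : 1 ≤ Fintype.card Jp := Fintype.card_pos_iff.mpr ⟨π x⟩
      rw [Nat.cast_sub h1, Nat.cast_one]
    rw [hrest, hind s hs x]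
    split_ifs <;> ring
  refine ⟨h0, hi, hii, ?_⟩
  -- (iii)
  intro Φ hΦ
  set S := Submodule.span ℤ {Φ' : J → ℤ | ∃ g : G, Φ' = transl g Φ0} with hSdef
  have hgen : ∀ g : G, transl g Φ0 ∈ S := fun g => Submodule.subset_span ⟨g, rfl⟩
  have hA : (fun _ : J => (Fintype.card G : ℤ)) ∈ S := by
    rw [← hi]
    exact Submodule.sum_mem S fun g _ => hgen g
  choose s0 hs0 using hπsurj
  have hB : ∀ (s : Jp → J), (∀ y, π (s y) = y) →
      (fun x => (mK : ℤ) * (if x = s (π x) then 1 else 0) +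
        ((Fintype.card Jp : ℤ) - 1)) ∈ S := by
    intro s hs
    choose g hg using fun y => htrans ξ0 (s y)
    have hmem : (∑ y : Jp, transl (g y) Φ0) ∈ S :=
      Submodule.sum_mem S fun y _ => hgen (g y)
    rw [hii s hs g hg] at hmem
    have heq : (fun x => (mK : ℤ) * Set.indicator (Set.range s)
          (fun _ => (1 : ℤ)) x + ((Fintype.card Jp : ℤ) - 1)) =
        fun x => (mK : ℤ) * (if x = s (π x) then 1 else 0) +
          ((Fintype.card Jp : ℤ) - 1) :=
      funext fun x => by rw [hind s hs x]
    rwa [heq] at hmem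
  have hC : ∀ (s : Jp → J), (∀ y, π (s y) = y) →
      (fun x => (Fintype.card G : ℤ) * (mK : ℤ) *
        (if x = s (π x) then 1 else 0)) ∈ S := by
    intro s hs
    have h3 := S.sub_mem
      (S.smul_mem (Fintype.card G : ℤ) (hB s hs))
      (S.smul_mem ((Fintype.card Jp : ℤ) - 1) hA)
    have heq : (fun x => (Fintype.card G : ℤ) * (mK : ℤ) *
          (if x = s (π x) then 1 else 0)) =
        (Fintype.card G : ℤ) • (fun x => (mK : ℤ) *
            (if x = s (π x) then 1 else 0) + ((Fintype.card Jp : ℤ) - 1)) -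
          ((Fintype.card Jp : ℤ) - 1) • (fun _ : J => (Fintype.card G : ℤ)) := by
      funext x
      simp only [Pi.sub_apply, Pi.smul_apply, smul_eq_mul]
      ring
    rw [heq]
    exact h3
  have hD : ∀ x0 : J, (fun z => (Fintype.card G : ℤ) * (mK : ℤ) *
      ((if z = x0 then (1 : ℤ) else 0) -
        (if z = s0 (π x0) then 1 else 0))) ∈ S := by
    intro x0
    set s1 := Function.update s0 (π x0) x0 with hs1def
    have hs1 : ∀ y, π (s1 y) = y := by
      intro y
      by_cases hy : y = π x0
      · subst hy
        rw [hs1def, Function.update_self]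
      · rw [hs1def, Function.update_of_ne hy]
        exact hs0 y
    have h3 := S.sub_mem (hC s1 hs1) (hC s0 hs0)
    have heq : (fun z => (Fintype.card G : ℤ) * (mK : ℤ) *
          ((if z = x0 then (1 : ℤ) else 0) -
            (if z = s0 (π x0) then 1 else 0))) =
        (fun x => (Fintype.card G : ℤ) * (mK : ℤ) *
            (if x = s1 (π x) then 1 else 0)) -
          (fun x => (Fintype.card G : ℤ) * (mK : ℤ) *
            (if x = s0 (π x) then 1 else 0)) := by
      funext z
      simp only [Pi.sub_apply]
      by_cases hz : π z = π x0
      · have e1 : s1 (π z) = x0 := by rw [hz, hs1def, Function.update_self]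
        have e2 : s0 (π z) = s0 (π x0) := by rw [hz]
        rw [e1, e2]
        ring
      · have e1 : s1 (π z) = s0 (π z) := by
          rw [hs1def, Function.update_of_ne hz]
        have e2 : z ≠ x0 := fun h => hz (by rw [h])
        have e3 : z ≠ s0 (π x0) := fun h => hz (by rw [h, hs0])
        rw [e1, if_neg e2, if_neg e3]
        ring
    rw [heq]
    exact h3
  refine ⟨(Fintype.card G : ℤ) * mK, ?_, ?_⟩
  · have hG : 0 < Fintype.card G := Fintype.card_pos
    exact mul_ne_zero (by exact_mod_cast hG.ne') (by exact_mod_cast hmK.ne')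
  · set c := fiberSum π Φ (π ξ0) with hc
    have hΦ' : ∀ y₁ y₂ : Jp, fiberSum π Φ y₁ = fiberSum π Φ y₂ := hΦ
    have hΦc : ∀ y, fiberSum π Φ y = c := fun y => hΦ' y (π ξ0)
    set coef : J → ℤ := fun x0 => Φ x0 - c * (if x0 = s0 (π x0) then 1 else 0)
      with hcoef
    have hmemfinal : (c • (fun x => (Fintype.card G : ℤ) * (mK : ℤ) *
          (if x = s0 (π x) then 1 else 0)) +
        ∑ x0 : J, coef x0 • (fun z => (Fintype.card G : ℤ) * (mK : ℤ) *
          ((if z = x0 then (1 : ℤ) else 0) -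
            (if z = s0 (π x0) then 1 else 0)))) ∈ S :=
      S.add_mem (S.smul_mem c (hC s0 hs0))
        (Submodule.sum_mem S fun x0 _ => S.smul_mem _ (hD x0))
    have hsecfib : ∀ y : Jp,
        fiberSum π (fun x => if x = s0 (π x) then (1 : ℤ) else 0) y = 1 := by
      intro y
      unfold fiberSum
      have hcg : ∀ x ∈ Finset.univ.filter (fun x => π x = y),
          (if x = s0 (π x) then (1 : ℤ) else 0) =
            (if x = s0 y then (1 : ℤ) else 0) := by
        intro x hx
        rw [(Finset.mem_filter.mp hx).2]
      rw [Finset.sum_congr rfl hcg,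
        Finset.sum_ite_eq' (Finset.univ.filter (fun x => π x = y)) (s0 y)
          (fun _ => (1 : ℤ))]
      simp [Finset.mem_filter, hs0 y]
    have heqfinal : ((Fintype.card G : ℤ) * mK) • Φ =
        c • (fun x => (Fintype.card G : ℤ) * (mK : ℤ) *
          (if x = s0 (π x) then 1 else 0)) +
        ∑ x0 : J, coef x0 • (fun z => (Fintype.card G : ℤ) * (mK : ℤ) *
          ((if z = x0 then (1 : ℤ) else 0) -
            (if z = s0 (π x0) then 1 else 0))) := by
      funext z
      simp only [Pi.add_apply, Pi.smul_apply, smul_eq_mul, Finset.sum_apply]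
      have hsumA : ∑ x0 : J, coef x0 * (if z = x0 then (1 : ℤ) else 0) =
          coef z := by
        simp only [mul_ite, mul_one, mul_zero]
        rw [Finset.sum_ite_eq, if_pos (Finset.mem_univ z)]
      have hsumB : ∑ x0 : J, coef x0 * (if z = s0 (π x0) then (1 : ℤ) else 0)
          = 0 := by
        by_cases hz : z = s0 (π z)
        · have hcond : ∀ x0 : J, (z = s0 (π x0)) ↔ (π x0 = π z) := by
            intro x0
            constructor
            · intro h
              rw [h, hs0]
            · intro h
              rw [h]
              exact hz
          have e1 : ∑ x0 : J, coef x0 * (if z = s0 (π x0) then (1 : ℤ) else 0)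
              = ∑ x0 : J, (if π x0 = π z then coef x0 else 0) := by
            refine Finset.sum_congr rfl fun x0 _ => ?_
            rw [mul_ite, mul_one, mul_zero, if_congr (hcond x0) rfl rfl]
          rw [e1, ← Finset.sum_filter]
          have e2 : ∑ x0 ∈ Finset.univ.filter (fun x0 => π x0 = π z), coef x0
              = fiberSum π coef (π z) := rfl
          rw [e2]
          have e3 : fiberSum π coef (π z) = fiberSum π Φ (π z) -
              c * fiberSum π (fun x => if x = s0 (π x) then (1 : ℤ) else 0)
                (π z) := by
            unfold fiberSum
            rw [Finset.mul_sum, ← Finset.sum_sub_distrib]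
          rw [e3, hΦc, hsecfib, mul_one, sub_self]
        · refine Finset.sum_eq_zero fun x0 _ => ?_
          rw [if_neg, mul_zero]
          intro h
          have : π z = π x0 := by rw [h, hs0]
          exact hz (by rw [this, ← h])
      have hsplit : ∑ x0 : J, coef x0 * ((Fintype.card G : ℤ) * (mK : ℤ) *
          ((if z = x0 then (1 : ℤ) else 0) -
            (if z = s0 (π x0) then 1 else 0))) =
          (Fintype.card G : ℤ) * (mK : ℤ) * coef z := by
        have hterm : ∀ x0 : J, coef x0 * ((Fintype.card G : ℤ) * (mK : ℤ) *
            ((if z = x0 then (1 : ℤ) else 0) -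
              (if z = s0 (π x0) then 1 else 0))) =
            (Fintype.card G : ℤ) * (mK : ℤ) *
              (coef x0 * (if z = x0 then (1 : ℤ) else 0)) -
            (Fintype.card G : ℤ) * (mK : ℤ) *
              (coef x0 * (if z = s0 (π x0) then (1 : ℤ) else 0)) :=
          fun x0 => by ring
        rw [Finset.sum_congr rfl fun x0 _ => hterm x0,
          Finset.sum_sub_distrib, ← Finset.mul_sum, ← Finset.mul_sum,
          hsumA, hsumB, mul_zero, sub_zero]
      rw [hsplit, hcoef]
      simp only
      ring
    rw [heqfinal]
    exact hmemfinal
end
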